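/- arXiv:2006.07549 — 3 statements merged into one kernel-verified Lean document; each statement's English description precedes it below -/
import Mathlib

section
/- Under the same setup, the variance of the one-sample REINFORCE estimator η_{a,g} equals (1/k² + 2/k⁵ − 2/k³ − 1/k⁴)·δ_{a,g} + 1/k⁴ − 1/k⁶. -/
open BigOperators

/-- Variance of the one-sample REINFORCE gradient estimator
`η_{a,g}(g',b) = 1[b=g']·δ_{g,g'}·(δ_{a,b} − 1/k)` with `g'` and `b`
independent uniform on the `k` goals/actions:
`Var = (1/k² + 2/k⁵ − 2/k³ − 1/k⁴)·δ_{a,g} + 1/k⁴ − 1/k⁶`. -/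
theorem reinforce_estimator_variance (k : ℕ) (hk : 0 < k) (a g : Fin k) :
    (1 / (k : ℝ)^2) *
      (∑ g' : Fin k, ∑ b : Fin k,
        ((if b = g' then (1:ℝ) else 0) * (if g = g' then 1 else 0) *
          ((if a = b then 1 else 0) - 1 / k))^2)
    - ((1 / (k : ℝ)^2) *
      ∑ g' : Fin k, ∑ b : Fin k,
        (if b = g' then (1:ℝ) else 0) * (if g = g' then 1 else 0) *
          ((if a = b then 1 else 0) - 1 / k))^2
    = (1 / (k : ℝ)^2 + 2 / k^5 - 2 / k^3 - 1 / k^4) * (if a = g then 1 else 0)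
        + 1 / k^4 - 1 / k^6 := by
  have hk0 : (k:ℝ) ≠ 0 := Nat.cast_ne_zero.mpr hk.ne'
  have h1 : (∑ g' : Fin k, ∑ b : Fin k,
        ((if b = g' then (1:ℝ) else 0) * (if g = g' then 1 else 0) *
          ((if a = b then 1 else 0) - 1 / k))^2)
      = ((if a = g then (1:ℝ) else 0) - 1 / k)^2 := by
    rw [Finset.sum_eq_single g]
    · rw [Finset.sum_eq_single g]
      · simp [eq_comm]
      · intro b _ hb; simp [hb]
      · simp
    · intro g' _ hg'; simp [Ne.symm hg']
    · simp
  have h2 : (∑ g' : Fin k, ∑ b : Fin k,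
        (if b = g' then (1:ℝ) else 0) * (if g = g' then 1 else 0) *
          ((if a = b then 1 else 0) - 1 / k))
      = ((if a = g then (1:ℝ) else 0) - 1 / k) := by
    rw [Finset.sum_eq_single g]
    · rw [Finset.sum_eq_single g]
      · simp [eq_comm]
      · intro b _ hb; simp [hb]
      · simp
    · intro g' _ hg'; simp [Ne.symm hg']
    · simp
  rw [h1, h2]
  by_cases h : a = g <;> simp [h] <;> field_simp <;> ring
end

section
/- In the one-step MDP with a uniformly random initial policy, under the hindsight distribution—where the action b is drawn uniformly from {1,…,k} and the goal g' is set equal to b (relabeled in hindsight, so r(s,b,g') = 1 always)—the normalized hindsight REINFORCE estimator η^h_{a,g} = r(s,b,g')·∂/∂L_{a,g} log π(b|s,g')/k satisfies E[η^h_{a,g}] = (1/k²)·(δ_{a,g}·(1 − 1/k)) = (1/k²)δ_{a,g} + o(1/k²), and its variance satisfies Var(η^h_{a,g}) = (1/k³)δ_{a,g} + o(1/k³). -/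
open BigOperators Filter

lemma my_sum_collapse {k : ℕ} (g : Fin (k+1)) (f : Fin (k+1) → ℝ) :
    ∑ b : Fin (k+1), (if g = b then f b else 0) = f g := by
  simp

lemma my_sum1 (k : ℕ) (ak gk : Fin (k+1)) (n : ℝ) :
    ∑ b : Fin (k + 1), (1 / n) *
        ((if gk = b then (1:ℝ) else 0) * ((if ak = b then 1 else 0) - 1 / n) / n)
    = (1/n) * (((if ak = gk then (1:ℝ) else 0) - 1/n)/n) := by
  rw [← my_sum_collapse gk (fun b => (1/n) * (((if ak = b then (1:ℝ) else 0) - 1/n)/n))]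
  apply Finset.sum_congr rfl
  intro b _
  by_cases h : gk = b <;> simp [h]

lemma my_sum2 (k : ℕ) (ak gk : Fin (k+1)) (n : ℝ) :
    ∑ b : Fin (k + 1), (1 / n) *
        ((if gk = b then (1:ℝ) else 0) * ((if ak = b then 1 else 0) - 1 / n) / n)^2
    = (1/n) * ((((if ak = gk then (1:ℝ) else 0) - 1/n)/n)^2) := by
  rw [← my_sum_collapse gk (fun b => (1/n) * ((((if ak = b then (1:ℝ) else 0) - 1/n)/n)^2))]
  apply Finset.sum_congr rfl
  intro b _
  by_cases h : gk = b <;> simp [h]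

/-- Mean and variance of the normalized hindsight REINFORCE estimator
`η^h_{a,g}(b) = δ_{g,b}(δ_{a,b} − 1/k)/k` with `b` uniform on `k` actions
(written with `k+1` actions so the action space is nonempty):
`E[η^h] = δ_{a,g}/k² + o(1/k²)` and `Var(η^h) = δ_{a,g}/k³ + o(1/k³)`. -/
theorem hindsight_estimator_mean_variance (a g : ∀ k : ℕ, Fin (k + 1)) :
    Tendsto (fun k : ℕ =>
      ((k : ℝ) + 1)^2 *
        ((∑ b : Fin (k + 1), (1 / ((k : ℝ) + 1)) *
            ((if g k = b then (1:ℝ) else 0) *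
              ((if a k = b then 1 else 0) - 1 / ((k : ℝ) + 1)) / ((k : ℝ) + 1)))
          - (if a k = g k then (1:ℝ) else 0) / ((k : ℝ) + 1)^2))
      atTop (nhds 0)
    ∧
    Tendsto (fun k : ℕ =>
      ((k : ℝ) + 1)^3 *
        (((∑ b : Fin (k + 1), (1 / ((k : ℝ) + 1)) *
            ((if g k = b then (1:ℝ) else 0) *
              ((if a k = b then 1 else 0) - 1 / ((k : ℝ) + 1)) / ((k : ℝ) + 1))^2)
          - (∑ b : Fin (k + 1), (1 / ((k : ℝ) + 1)) *
            ((if g k = b then (1:ℝ) else 0) *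
              ((if a k = b then 1 else 0) - 1 / ((k : ℝ) + 1)) / ((k : ℝ) + 1)))^2)
          - (if a k = g k then (1:ℝ) else 0) / ((k : ℝ) + 1)^3))
      atTop (nhds 0) := by
  have hn : ∀ k : ℕ, ((k : ℝ) + 1) ≠ 0 := fun k => by positivity
  have hn1 : ∀ k : ℕ, (1:ℝ) ≤ (k : ℝ) + 1 := fun k => by
    have : (0:ℝ) ≤ (k:ℝ) := Nat.cast_nonneg k
    linarith
  have htend : Tendsto (fun k : ℕ => 3 / ((k : ℝ) + 1)) atTop (nhds 0) := by
    have := tendsto_one_div_add_atTop_nhds_zero_nat (𝕜 := ℝ)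
    have h3 : Tendsto (fun k : ℕ => 3 * (1 / ((k : ℝ) + 1))) atTop (nhds (3 * 0)) :=
      this.const_mul 3
    simpa [mul_one_div, div_eq_mul_inv] using h3
  constructor
  · have heq : ∀ k : ℕ,
        ((k : ℝ) + 1)^2 *
        ((∑ b : Fin (k + 1), (1 / ((k : ℝ) + 1)) *
            ((if g k = b then (1:ℝ) else 0) *
              ((if a k = b then 1 else 0) - 1 / ((k : ℝ) + 1)) / ((k : ℝ) + 1)))
          - (if a k = g k then (1:ℝ) else 0) / ((k : ℝ) + 1)^2)
        = -(1 / ((k : ℝ) + 1)) := by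
      intro k
      rw [my_sum1 k (a k) (g k) ((k : ℝ) + 1)]
      by_cases h : a k = g k <;> simp only [h, if_pos, if_neg, if_true, if_false] <;>
        field_simp <;> ring
    simp only [heq]
    simpa using (tendsto_one_div_add_atTop_nhds_zero_nat (𝕜 := ℝ)).neg
  · refine squeeze_zero_norm ?_ htend
    intro k
    rw [my_sum1 k (a k) (g k) ((k : ℝ) + 1), my_sum2 k (a k) (g k) ((k : ℝ) + 1)]
    set n : ℝ := (k : ℝ) + 1 with hnd
    have h0 : n ≠ 0 := hn k
    have h1 : (1:ℝ) ≤ n := hn1 k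
    have hinv : 0 < 1 / n := by positivity
    have hinv1 : 1 / n ≤ 1 := by
      rw [div_le_one (by linarith)]; linarith
    by_cases h : a k = g k
    · simp only [if_pos h]
      have key : n ^ 3 * (1 / n * (((1:ℝ) - 1 / n) / n) ^ 2 - (1 / n * (((1:ℝ) - 1 / n) / n)) ^ 2
          - 1 / n ^ 3) = (1 - 1/n)^2 * (1 - 1/n) - 1 := by
        field_simp
      rw [key, Real.norm_eq_abs, abs_le, show (3:ℝ)/n = 3*(1/n) by ring]
      set t : ℝ := 1/n with htd
      constructor
      · nlinarith [sq_nonneg t, sq_nonneg (1-t), mul_nonneg hinv.le (sq_nonneg t)]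
      · nlinarith [sq_nonneg t, sq_nonneg (1-t), mul_nonneg hinv.le (sq_nonneg (1-t))]
    · simp only [if_neg h]
      have key : n ^ 3 * (1 / n * (((0:ℝ) - 1 / n) / n) ^ 2 - (1 / n * (((0:ℝ) - 1 / n) / n)) ^ 2
          - 0 / n ^ 3) = (1/n)^2 * (1 - 1/n) := by
        field_simp
        ring
      rw [key, Real.norm_eq_abs, abs_le, show (3:ℝ)/n = 3*(1/n) by ring]
      set t : ℝ := 1/n with htd
      constructor
      · nlinarith [mul_nonneg (sq_nonneg t) (by linarith : (0:ℝ) ≤ 1-t)]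
      · nlinarith [sq_nonneg t, mul_nonneg hinv.le hinv.le]
end

section
/- For the hindsight estimator η^h_{a,g} in the diagonal case a = g, the squared relative error Var(η^h_{a,g})/(E[η_{a,g}])² (with E[η_{a,g}] = 1/k² − 1/k³, the mean of the on-policy estimator) grows as k(1+o(1)): the ratio divided by k tends to 1 as k → ∞. Hence the hindsight estimator's relative error is √k(1+o(1)), sublinear in k, compared to the linear growth k(1+o(1)) for the on-policy estimator. -/
open BigOperators Filter

lemma hindsight_aux (n : ℝ) (h0 : n ≠ 0) (h1 : n - 1 ≠ 0) :
    (1/n * ((1 - 1/n)/n)^2 - (1/n * ((1 - 1/n)/n))^2) / (1/n^2 - 1/n^3)^2 / n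
      = (n - 1)/n := by
  have hden : (1/n^2 - 1/n^3) = (n - 1)/n^3 := by
    field_simp
  have hnum : (1/n * ((1 - 1/n)/n)^2 - (1/n * ((1 - 1/n)/n))^2) = (n-1)^3/n^6 := by
    field_simp
  rw [hnum, hden, div_pow, div_div_div_eq]
  have h6 : (n:ℝ)^6 ≠ 0 := pow_ne_zero _ h0
  have h3 : ((n:ℝ)^3)^2 ≠ 0 := pow_ne_zero _ (pow_ne_zero _ h0)
  have h2 : ((n:ℝ) - 1)^2 ≠ 0 := pow_ne_zero _ h1
  field_simp

/-- In the diagonal case `a = g`, the squared relative error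
`Var(η^h_{a,g})/(E[η_{a,g}])²` of the hindsight estimator
`η^h_{a,g}(b) = δ_{g,b}(δ_{a,b} − 1/k)/k` (with `b` uniform, relative to the
on-policy mean `E[η_{a,g}] = 1/k² − 1/k³`) grows as `k(1+o(1))`: the ratio
divided by `k` tends to `1`; hence the relative error is `√k(1+o(1))`,
sublinear in `k`. -/
theorem hindsight_relative_error_sublinear (a g : ∀ k : ℕ, Fin (k + 1))
    (hag : ∀ k, a k = g k) :
    Tendsto (fun k : ℕ =>
      ((∑ b : Fin (k + 1),
          (1 / ((k : ℝ) + 1)) *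
            ((if g k = b then (1:ℝ) else 0) *
              ((if a k = b then (1:ℝ) else 0) - 1 / ((k : ℝ) + 1)) /
                ((k : ℝ) + 1)) ^ 2)
        - (∑ b : Fin (k + 1),
            (1 / ((k : ℝ) + 1)) *
              ((if g k = b then (1:ℝ) else 0) *
                ((if a k = b then (1:ℝ) else 0) - 1 / ((k : ℝ) + 1)) /
                  ((k : ℝ) + 1))) ^ 2)
        / (1 / ((k : ℝ) + 1) ^ 2 - 1 / ((k : ℝ) + 1) ^ 3) ^ 2
        / ((k : ℝ) + 1))
      atTop (nhds 1) := by
  have hlim : Tendsto (fun k : ℕ => (k : ℝ) / ((k : ℝ) + 1)) atTop (nhds 1) := by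
    have h0 : Tendsto (fun k : ℕ => 1 - 1 / ((k : ℝ) + 1)) atTop (nhds 1) := by
      have : Tendsto (fun n : ℕ => 1 / ((n : ℝ) + 1)) atTop (nhds 0) := tendsto_one_div_add_atTop_nhds_zero_nat
      simpa using (tendsto_const_nhds.sub this)
    refine h0.congr (fun k => ?_)
    have hk : ((k : ℝ) + 1) ≠ 0 := by positivity
    field_simp
    ring
  refine hlim.congr' ?_
  filter_upwards [eventually_ge_atTop 1] with k hk
  have hn : ((k : ℝ) + 1) ≠ 0 := by positivity
  have hkpos : (0:ℝ) < (k : ℝ) := by exact_mod_cast hk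
  have hk0 : ((k : ℝ)) ≠ 0 := ne_of_gt hkpos
  have h1 : (∑ b : Fin (k + 1),
      (1 / ((k : ℝ) + 1)) *
        ((if g k = b then (1:ℝ) else 0) *
          ((if a k = b then (1:ℝ) else 0) - 1 / ((k : ℝ) + 1)) /
            ((k : ℝ) + 1)) ^ 2) =
      (1 / ((k : ℝ) + 1)) * ((1 - 1 / ((k : ℝ) + 1)) / ((k : ℝ) + 1)) ^ 2 := by
    rw [Finset.sum_eq_single (g k)]
    · simp [hag k]
    · intro b _ hb
      simp [Ne.symm hb]
    · simp
  have h2 : (∑ b : Fin (k + 1),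
      (1 / ((k : ℝ) + 1)) *
        ((if g k = b then (1:ℝ) else 0) *
          ((if a k = b then (1:ℝ) else 0) - 1 / ((k : ℝ) + 1)) /
            ((k : ℝ) + 1))) =
      (1 / ((k : ℝ) + 1)) * ((1 - 1 / ((k : ℝ) + 1)) / ((k : ℝ) + 1)) := by
    rw [Finset.sum_eq_single (g k)]
    · simp [hag k]
    · intro b _ hb
      simp [Ne.symm hb]
    · simp
  rw [h1, h2]
  have hn2 : ((k : ℝ) + 1) - 1 ≠ 0 := by
    simpa using hk0
  have := hindsight_aux ((k : ℝ) + 1) hn hn2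
  simpa using this.symm
end
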